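/- There is an absolute constant C such that for all real R ≥ 2, |∑_{n ≤ R} n²·log(1 + (R/n)·(R−n)/(R+n)) − (5/6 − (log 2)/3 − π/6)·R³| ≤ C·R²·log R, the sum over positive integers n ≤ R. -/

import Mathlib

noncomputable def fAux (R t : ℝ) : ℝ :=
  t ^ 2 * (Real.log (R ^ 2 + t ^ 2) - Real.log t - Real.log (R + t))

noncomputable def FAux (R t : ℝ) : ℝ :=
  t ^ 3 / 3 * Real.log (R ^ 2 + t ^ 2) - 2 / 9 * t ^ 3 + 2 / 3 * R ^ 2 * t
    - 2 / 3 * R ^ 3 * Real.arctan (t / R)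
    - (t ^ 3 / 3 * Real.log t - t ^ 3 / 9)
    - (t ^ 3 / 3 * Real.log (R + t) - t ^ 3 / 9 + R / 6 * t ^ 2 - R ^ 2 / 3 * t
        + R ^ 3 / 3 * Real.log (R + t))

lemma FAux_hasDerivAt {R t : ℝ} (hR : 0 < R) (ht : 0 < t) :
    HasDerivAt (FAux R) (fAux R t) t := by
  have hRt : 0 < R + t := by linarith
  have h1 : (0:ℝ) < R ^ 2 + t ^ 2 := by positivity
  have hc : HasDerivAt (fun x : ℝ => x ^ 3) (3 * t ^ 2) t := by
    simpa using hasDerivAt_pow 3 t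
  have hc3 : HasDerivAt (fun x : ℝ => x ^ 3 / 3) (t ^ 2) t := by
    have := hc.div_const 3
    simpa [mul_comm, mul_div_assoc] using this
  have hin : HasDerivAt (fun x : ℝ => R ^ 2 + x ^ 2) (2 * t) t := by
    simpa using (hasDerivAt_pow 2 t).const_add (R ^ 2)
  have hlog1 : HasDerivAt (fun x : ℝ => Real.log (R ^ 2 + x ^ 2))
      (2 * t / (R ^ 2 + t ^ 2)) t := hin.log h1.ne'
  have hlog2 : HasDerivAt Real.log (1 / t) t := by
    simpa [one_div] using Real.hasDerivAt_log ht.ne'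
  have hlog3 : HasDerivAt (fun x : ℝ => Real.log (R + x)) (1 / (R + t)) t := by
    have h : HasDerivAt (fun x : ℝ => R + x) 1 t := (hasDerivAt_id t).const_add R
    simpa using h.log hRt.ne'
  have harc : HasDerivAt (fun x : ℝ => Real.arctan (x / R))
      (1 / (1 + (t / R) ^ 2) * (1 / R)) t := by
    have h : HasDerivAt (fun x : ℝ => x / R) (1 / R) t := by
      simpa using (hasDerivAt_id t).div_const R
    exact h.arctan
  have H1 := (hc3.mul hlog1).sub (hc.const_mul (2/9 : ℝ))
  have H2 := H1.add ((hasDerivAt_id t).const_mul (2 / 3 * R ^ 2))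
  have H3 := H2.sub (harc.const_mul (2 / 3 * R ^ 3))
  have H4 := H3.sub ((hc3.mul hlog2).sub (hc.div_const 9))
  have H5a := ((hc3.mul hlog3).sub (hc.div_const 9)).add ((hasDerivAt_pow 2 t).const_mul (R / 6))
  have H5b := (H5a.sub ((hasDerivAt_id t).const_mul (R ^ 2 / 3))).add (hlog3.const_mul (R ^ 3 / 3))
  have H := H4.sub H5b
  have h1R : (1:ℝ) + (t / R) ^ 2 ≠ 0 := by positivity
  refine H.congr_deriv ?_
  unfold fAux
  field_simp
  ring

lemma fAux_intervalIntegrable {R a b : ℝ} (hR : 0 < R) (ha : 0 < a) (hab : a ≤ b) :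
    IntervalIntegrable (fAux R) MeasureTheory.volume a b := by
  apply ContinuousOn.intervalIntegrable
  have hsub : Set.uIcc a b ⊆ Set.Ici a := by
    rw [Set.uIcc_of_le hab]; exact Set.Icc_subset_Ici_self
  unfold fAux
  apply ContinuousOn.mul (by fun_prop)
  apply ContinuousOn.sub
  apply ContinuousOn.sub
  · exact ContinuousOn.log (by fun_prop) (fun x hx => by positivity)
  · exact ContinuousOn.log (by fun_prop)
      (fun x hx => by have := ha.trans_le (hsub hx); exact this.ne')
  · exact ContinuousOn.log (by fun_prop)
      (fun x hx => by have := ha.trans_le (hsub hx); positivity)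

lemma integral_fAux {R a b : ℝ} (hR : 0 < R) (ha : 0 < a) (hab : a ≤ b) :
    ∫ t in a..b, fAux R t = FAux R b - FAux R a := by
  apply intervalIntegral.integral_eq_sub_of_hasDerivAt
  · intro t ht
    rw [Set.uIcc_of_le hab] at ht
    exact FAux_hasDerivAt hR (lt_of_lt_of_le ha ht.1)
  · exact fAux_intervalIntegrable hR ha hab

lemma fAux_bound {R x : ℝ} (hR : 2 ≤ R) (hx : 1 ≤ x) (hxR : x ≤ R) :
    |fAux R x| ≤ 3 * R ^ 2 * Real.log R := by
  have hx0 : 0 < x := by linarith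
  have hR0 : 0 < R := by linarith
  have hL0 : 0 ≤ Real.log (R ^ 2 + x ^ 2) - Real.log x - Real.log (R + x) := by
    have h : Real.log x + Real.log (R + x) = Real.log (x * (R + x)) :=
      (Real.log_mul hx0.ne' (by positivity)).symm
    have h2 : Real.log (x * (R + x)) ≤ Real.log (R ^ 2 + x ^ 2) :=
      Real.log_le_log (by positivity) (by nlinarith)
    linarith
  have hL3 : Real.log (R ^ 2 + x ^ 2) - Real.log x - Real.log (R + x) ≤ 3 * Real.log R := by
    have h1 : Real.log (R ^ 2 + x ^ 2) ≤ Real.log (2 * R ^ 2) :=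
      Real.log_le_log (by positivity) (by nlinarith)
    have h2 : Real.log (2 * R ^ 2) = Real.log 2 + 2 * Real.log R := by
      rw [Real.log_mul two_ne_zero (by positivity), Real.log_pow]; norm_num
    have h3 : Real.log 2 ≤ Real.log R := Real.log_le_log (by norm_num) hR
    have h4 : 0 ≤ Real.log x := Real.log_nonneg hx
    have h5 : 0 ≤ Real.log (R + x) := Real.log_nonneg (by linarith)
    linarith
  have habs : |fAux R x| = x ^ 2 * (Real.log (R ^ 2 + x ^ 2) - Real.log x - Real.log (R + x)) := by
    rw [fAux, abs_mul, abs_of_nonneg (by positivity : (0:ℝ) ≤ x ^ 2), abs_of_nonneg hL0]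
  rw [habs]
  calc x ^ 2 * (Real.log (R ^ 2 + x ^ 2) - Real.log x - Real.log (R + x))
      ≤ R ^ 2 * (3 * Real.log R) := by
        apply mul_le_mul (by nlinarith) hL3 hL0 (by positivity)
    _ = 3 * R ^ 2 * Real.log R := by ring

lemma log_aux {R y : ℝ} (hR : 2 ≤ R) (h0 : 0 < y) (h : y ≤ 2 * R ^ 2) :
    Real.log y ≤ 3 * Real.log R := by
  have h1 : Real.log y ≤ Real.log (2 * R ^ 2) := Real.log_le_log h0 h
  have h2 : Real.log (2 * R ^ 2) = Real.log 2 + 2 * Real.log R := by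
    rw [Real.log_mul two_ne_zero (by positivity), Real.log_pow]; norm_num
  have h3 : Real.log 2 ≤ Real.log R := Real.log_le_log (by norm_num) hR
  linarith

lemma sum_piece_bounds {N : ℕ} (hN : 1 ≤ N) {h : ℝ → ℝ}
    (hmono : MonotoneOn h (Set.Icc (1:ℝ) (N:ℝ)))
    (h0 : ∀ x ∈ Set.Icc (1:ℝ) (N:ℝ), 0 ≤ h x) :
    (∫ x in (1:ℝ)..(N:ℝ), h x) ≤ (∑ n ∈ Finset.Icc 1 N, h n) ∧
      (∑ n ∈ Finset.Icc 1 N, h n) ≤ (∫ x in (1:ℝ)..(N:ℝ), h x) + h N := by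
  have hmono' : MonotoneOn h (Set.Icc ((1:ℕ):ℝ) ((N:ℕ):ℝ)) := by
    simpa using hmono
  have e1 : (∑ n ∈ Finset.Icc 1 N, h n) = (∑ n ∈ Finset.Ico 1 N, h n) + h N := by
    rw [← Finset.Ico_add_one_right_eq_Icc, Finset.sum_Ico_succ_top hN]
  have e2 : (∑ i ∈ Finset.Ico 1 N, h ((i:ℕ) + 1 : ℕ)) = ∑ n ∈ Finset.Icc 2 N, h n := by
    have hmap : Finset.Icc 2 N
        = (Finset.Ico 1 N).map ⟨fun i => i + 1, fun a b hab => by simpa using hab⟩ := by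
      ext x
      simp only [Finset.mem_Icc, Finset.mem_map, Finset.mem_Ico, Function.Embedding.coeFn_mk]
      constructor
      · intro hx; exact ⟨x - 1, by omega, by show x - 1 + 1 = x; omega⟩
      · rintro ⟨y, hy, rfl⟩; change 2 ≤ y + 1 ∧ y + 1 ≤ N; omega
    rw [hmap, Finset.sum_map]
    rfl
  have e3 : (∑ n ∈ Finset.Icc 1 N, h n) = h 1 + ∑ n ∈ Finset.Icc 2 N, h n := by
    have hins : Finset.Icc 1 N = insert 1 (Finset.Icc 2 N) := by
      ext x; simp only [Finset.mem_Icc, Finset.mem_insert]; omega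
    rw [hins, Finset.sum_insert (by simp)]
    norm_num
  constructor
  · have hlow := hmono'.integral_le_sum_Ico hN
    have h1 : (0:ℝ) ≤ h 1 := by
      apply h0; constructor <;> [norm_num; exact_mod_cast hN]
    simp only [Nat.cast_one] at hlow
    rw [e2] at hlow
    linarith [hlow, e3]
  · have hup := hmono'.sum_le_integral_Ico hN
    simp only [Nat.cast_one] at hup
    linarith [e1]

set_option maxHeartbeats 2000000 in
lemma endgame {R : ℝ} (hR : 2 ≤ R) :
    |FAux R R - FAux R 1 - (5 / 6 - Real.log 2 / 3 - Real.pi / 6) * R ^ 3|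
      ≤ 10 * R ^ 2 * Real.log R := by
  have hR0 : (0:ℝ) < R := by linarith
  have key : FAux R R - FAux R 1 - (5 / 6 - Real.log 2 / 3 - Real.pi / 6) * R ^ 3
      = R ^ 3 * (Real.log (R + 1) - Real.log R) / 3
        + (Real.log (R + 1) - Real.log (R ^ 2 + 1)) / 3
        + 2 / 3 * (R ^ 3 * Real.arctan (1 / R) - R ^ 2)
        + R / 6 - R ^ 2 / 3 := by
    unfold FAux
    rw [div_self hR0.ne', Real.arctan_one,
       show R ^ 2 + R ^ 2 = 2 * R ^ 2 by ring, show R + R = 2 * R by ring,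
       Real.log_mul two_ne_zero (by positivity), Real.log_mul two_ne_zero hR0.ne',
       Real.log_pow]
    simp only [one_pow, Real.log_one]
    push_cast
    ring
  have hu2 : Real.log 2 ≤ Real.log R := Real.log_le_log (by norm_num) hR
  have hu : (1/2 : ℝ) ≤ Real.log R := le_trans (by linarith [Real.log_two_gt_d9]) hu2
  have hw1 : Real.log R ≤ Real.log (R + 1) := Real.log_le_log hR0 (by linarith)
  have hw2 : Real.log (R + 1) ≤ Real.log R + 1 / R := by
    have h := Real.log_le_sub_one_of_pos (show (0:ℝ) < (R + 1) / R by positivity)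
    rw [Real.log_div (by positivity : (0:ℝ) < R + 1).ne' hR0.ne'] at h
    have e : (R + 1) / R - 1 = 1 / R := by field_simp; ring
    linarith
  have hwz1 : Real.log (R + 1) - Real.log (R ^ 2 + 1) ≤ 0 := by
    have := Real.log_le_log (by positivity : (0:ℝ) < R + 1) (by nlinarith : R + 1 ≤ R ^ 2 + 1)
    linarith
  have hz2 : Real.log (R ^ 2 + 1) ≤ 3 * Real.log R := log_aux hR (by positivity) (by nlinarith)
  have hw0 : 0 ≤ Real.log (R + 1) := Real.log_nonneg (by linarith)
  have hwz2 : -(3 * Real.log R) ≤ Real.log (R + 1) - Real.log (R ^ 2 + 1) := by linarith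
  have hq0 : 0 ≤ Real.arctan (1 / R) := by
    have := Real.arctan_strictMono.monotone (show (0:ℝ) ≤ 1 / R by positivity)
    simpa [Real.arctan_zero] using this
  have hq1 : Real.arctan (1 / R) ≤ 1 / R := by
    have h := Real.le_tan hq0 (Real.arctan_lt_pi_div_two _)
    rwa [Real.tan_arctan] at h
  have e : R ^ 3 * (1 / R) = R ^ 2 := by field_simp
  have k1 : R ^ 3 * (Real.log (R + 1) - Real.log R) ≤ R ^ 2 := by
    have := mul_le_mul_of_nonneg_left
      (by linarith : Real.log (R + 1) - Real.log R ≤ 1 / R) (by positivity : (0:ℝ) ≤ R ^ 3)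
    linarith
  have k3 : 0 ≤ R ^ 3 * (Real.log (R + 1) - Real.log R) :=
    mul_nonneg (by positivity) (by linarith)
  have k2 : R ^ 3 * Real.arctan (1 / R) ≤ R ^ 2 := by
    have := mul_le_mul_of_nonneg_left hq1 (by positivity : (0:ℝ) ≤ R ^ 3)
    linarith
  have k4 : 0 ≤ R ^ 3 * Real.arctan (1 / R) := mul_nonneg (by positivity) hq0
  have hRu : R ^ 2 ≤ 2 * R ^ 2 * Real.log R := by nlinarith [sq_nonneg R]
  have huR2 : Real.log R ≤ R ^ 2 * Real.log R := by
    nlinarith [mul_nonneg (show (0:ℝ) ≤ R ^ 2 - 1 by nlinarith)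
      (show (0:ℝ) ≤ Real.log R by linarith)]
  have hRR : R ≤ R ^ 2 := by nlinarith
  rw [key, abs_le]
  constructor <;> linarith [k1, k2, k3, k4, hRu, huR2, hRR, hwz1, hwz2, hu]

set_option maxHeartbeats 2000000 in
theorem sum_f_asymp :
    ∃ C : ℝ, 0 < C ∧ ∀ R : ℝ, 2 ≤ R →
      |(∑ n ∈ Finset.Icc 1 ⌊R⌋₊,
            (n : ℝ) ^ 2 * Real.log (1 + (R / n) * ((R - n) / (R + n)))) -
          (5 / 6 - Real.log 2 / 3 - Real.pi / 6) * R ^ 3| ≤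
        C * R ^ 2 * Real.log R := by
  refine ⟨25, by norm_num, ?_⟩
  intro R hR
  have hR0 : (0:ℝ) < R := by linarith
  set N := ⌊R⌋₊ with hNdef
  have hN1 : 1 ≤ N := Nat.le_floor (by exact_mod_cast (by linarith : (1:ℝ) ≤ R))
  have hNR : (N:ℝ) ≤ R := Nat.floor_le (by linarith)
  have hN1' : (1:ℝ) ≤ (N:ℝ) := by exact_mod_cast hN1
  have hRN1 : R ≤ (N:ℝ) + 1 := by
    have := Nat.lt_floor_add_one R
    push_cast at this ⊢
    linarith
  have hu2 : Real.log 2 ≤ Real.log R := Real.log_le_log (by norm_num) hR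
  have hu : (1/2 : ℝ) ≤ Real.log R := le_trans (by linarith [Real.log_two_gt_d9]) hu2
  -- rewrite the summand
  have hrw : (∑ n ∈ Finset.Icc 1 N, (n:ℝ) ^ 2 * Real.log (1 + (R / n) * ((R - n) / (R + n))))
      = ∑ n ∈ Finset.Icc 1 N, fAux R n := by
    apply Finset.sum_congr rfl
    intro n hn
    rw [Finset.mem_Icc] at hn
    have hn1 : (1:ℝ) ≤ (n:ℝ) := by exact_mod_cast hn.1
    have hnN : (n:ℝ) ≤ (N:ℝ) := by exact_mod_cast hn.2
    have hnR : (n:ℝ) ≤ R := le_trans hnN hNR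
    have hn0 : (0:ℝ) < n := by linarith
    have harg : 1 + (R / n) * ((R - n) / (R + n)) = (R ^ 2 + n ^ 2) / (n * (R + n)) := by
      field_simp
      ring
    rw [harg, Real.log_div (by positivity) (by positivity),
       Real.log_mul hn0.ne' (by positivity), fAux]
    ring
  rw [hrw]
  -- the three monotone pieces
  have hmonoA : MonotoneOn (fun t : ℝ => t ^ 2 * Real.log (R ^ 2 + t ^ 2))
      (Set.Icc (1:ℝ) (N:ℝ)) := by
    intro x hx y hy hxy
    have hx1 := hx.1
    exact mul_le_mul (by nlinarith) (Real.log_le_log (by positivity) (by nlinarith))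
      (Real.log_nonneg (by nlinarith)) (by positivity)
  have hmonoB : MonotoneOn (fun t : ℝ => t ^ 2 * Real.log t) (Set.Icc (1:ℝ) (N:ℝ)) := by
    intro x hx y hy hxy
    have hx1 := hx.1
    exact mul_le_mul (by nlinarith) (Real.log_le_log (by linarith) hxy)
      (Real.log_nonneg hx1) (by positivity)
  have hmonoC : MonotoneOn (fun t : ℝ => t ^ 2 * Real.log (R + t)) (Set.Icc (1:ℝ) (N:ℝ)) := by
    intro x hx y hy hxy
    have hx1 := hx.1
    exact mul_le_mul (by nlinarith) (Real.log_le_log (by linarith) (by linarith))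
      (Real.log_nonneg (by linarith)) (by positivity)
  have hnnA : ∀ x ∈ Set.Icc (1:ℝ) (N:ℝ), 0 ≤ x ^ 2 * Real.log (R ^ 2 + x ^ 2) :=
    fun x hx => mul_nonneg (by positivity) (Real.log_nonneg (by nlinarith [hx.1]))
  have hnnB : ∀ x ∈ Set.Icc (1:ℝ) (N:ℝ), 0 ≤ x ^ 2 * Real.log x :=
    fun x hx => mul_nonneg (by positivity) (Real.log_nonneg hx.1)
  have hnnC : ∀ x ∈ Set.Icc (1:ℝ) (N:ℝ), 0 ≤ x ^ 2 * Real.log (R + x) :=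
    fun x hx => mul_nonneg (by positivity) (Real.log_nonneg (by linarith [hx.1]))
  obtain ⟨lA, uA⟩ := sum_piece_bounds hN1 hmonoA hnnA
  obtain ⟨lB, uB⟩ := sum_piece_bounds hN1 hmonoB hnnB
  obtain ⟨lC, uC⟩ := sum_piece_bounds hN1 hmonoC hnnC
  -- integrability of the pieces
  have hiA : IntervalIntegrable (fun t : ℝ => t ^ 2 * Real.log (R ^ 2 + t ^ 2))
      MeasureTheory.volume 1 (N:ℝ) := by
    apply ContinuousOn.intervalIntegrable
    exact ContinuousOn.mul (by fun_prop)
      (ContinuousOn.log (by fun_prop) (fun x hx => by positivity))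
  have hsub1 : Set.uIcc (1:ℝ) (N:ℝ) ⊆ Set.Ici (1:ℝ) := by
    rw [Set.uIcc_of_le hN1']; exact Set.Icc_subset_Ici_self
  have hiB : IntervalIntegrable (fun t : ℝ => t ^ 2 * Real.log t)
      MeasureTheory.volume 1 (N:ℝ) := by
    apply ContinuousOn.intervalIntegrable
    exact ContinuousOn.mul (by fun_prop)
      (ContinuousOn.log (by fun_prop)
        (fun x hx => by have := hsub1 hx; simp only [Set.mem_Ici] at this; linarith))
  have hiC : IntervalIntegrable (fun t : ℝ => t ^ 2 * Real.log (R + t))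
      MeasureTheory.volume 1 (N:ℝ) := by
    apply ContinuousOn.intervalIntegrable
    exact ContinuousOn.mul (by fun_prop)
      (ContinuousOn.log (by fun_prop)
        (fun x hx => by have := hsub1 hx; simp only [Set.mem_Ici] at this; positivity))
  -- split sum and integral
  have hsplit : (∑ n ∈ Finset.Icc 1 N, fAux R n)
      = (∑ n ∈ Finset.Icc 1 N, ((n:ℝ) ^ 2 * Real.log (R ^ 2 + (n:ℝ) ^ 2)))
        - (∑ n ∈ Finset.Icc 1 N, ((n:ℝ) ^ 2 * Real.log (n:ℝ)))
        - (∑ n ∈ Finset.Icc 1 N, ((n:ℝ) ^ 2 * Real.log (R + (n:ℝ)))) := by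
    rw [← Finset.sum_sub_distrib, ← Finset.sum_sub_distrib]
    apply Finset.sum_congr rfl
    intro n _
    rw [fAux]
    ring
  have hIsplit : (∫ x in (1:ℝ)..(N:ℝ), fAux R x)
      = (∫ x in (1:ℝ)..(N:ℝ), x ^ 2 * Real.log (R ^ 2 + x ^ 2))
        - (∫ x in (1:ℝ)..(N:ℝ), x ^ 2 * Real.log x)
        - (∫ x in (1:ℝ)..(N:ℝ), x ^ 2 * Real.log (R + x)) := by
    rw [← intervalIntegral.integral_sub hiA hiB,
       ← intervalIntegral.integral_sub (hiA.sub hiB) hiC]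
    apply intervalIntegral.integral_congr
    intro x _
    rw [fAux]
    ring
  -- FTC
  have hI : (∫ x in (1:ℝ)..(N:ℝ), fAux R x) = FAux R N - FAux R 1 :=
    integral_fAux hR0 one_pos hN1'
  have hI2 : (∫ x in (N:ℝ)..R, fAux R x) = FAux R R - FAux R N :=
    integral_fAux hR0 (by linarith) hNR
  -- tail bound
  have htail : |FAux R R - FAux R N| ≤ 3 * R ^ 2 * Real.log R := by
    rw [← hI2]
    have hb : ‖∫ x in (N:ℝ)..R, fAux R x‖ ≤ (3 * R ^ 2 * Real.log R) * |R - (N:ℝ)| := by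
      apply intervalIntegral.norm_integral_le_of_norm_le_const
      intro x hx
      rw [Set.uIoc_of_le hNR] at hx
      rw [Real.norm_eq_abs]
      exact fAux_bound hR (by linarith [hx.1]) hx.2
    have habs : |R - (N:ℝ)| ≤ 1 := by rw [abs_le]; constructor <;> linarith
    calc |∫ x in (N:ℝ)..R, fAux R x| ≤ (3 * R ^ 2 * Real.log R) * |R - (N:ℝ)| := hb
      _ ≤ (3 * R ^ 2 * Real.log R) * 1 := by
          apply mul_le_mul_of_nonneg_left habs
          nlinarith [mul_nonneg (sq_nonneg R) (show (0:ℝ) ≤ Real.log R by linarith)]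
      _ = 3 * R ^ 2 * Real.log R := by ring
  -- bounds on the piece values at N
  have hAN : (N:ℝ) ^ 2 * Real.log (R ^ 2 + (N:ℝ) ^ 2) ≤ 3 * R ^ 2 * Real.log R := by
    calc (N:ℝ) ^ 2 * Real.log (R ^ 2 + (N:ℝ) ^ 2) ≤ R ^ 2 * (3 * Real.log R) :=
          mul_le_mul (by nlinarith) (log_aux hR (by positivity) (by nlinarith))
            (Real.log_nonneg (by nlinarith)) (by positivity)
      _ = 3 * R ^ 2 * Real.log R := by ring
  have hBN : (N:ℝ) ^ 2 * Real.log (N:ℝ) ≤ 3 * R ^ 2 * Real.log R := by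
    calc (N:ℝ) ^ 2 * Real.log (N:ℝ) ≤ R ^ 2 * (3 * Real.log R) :=
          mul_le_mul (by nlinarith) (log_aux hR (by linarith) (by nlinarith))
            (Real.log_nonneg hN1') (by positivity)
      _ = 3 * R ^ 2 * Real.log R := by ring
  have hCN : (N:ℝ) ^ 2 * Real.log (R + (N:ℝ)) ≤ 3 * R ^ 2 * Real.log R := by
    calc (N:ℝ) ^ 2 * Real.log (R + (N:ℝ)) ≤ R ^ 2 * (3 * Real.log R) :=
          mul_le_mul (by nlinarith) (log_aux hR (by linarith) (by nlinarith))
            (Real.log_nonneg (by linarith)) (by positivity)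
      _ = 3 * R ^ 2 * Real.log R := by ring
  -- combine: sum vs integral
  have h1 : |(∑ n ∈ Finset.Icc 1 N, fAux R n) - (∫ x in (1:ℝ)..(N:ℝ), fAux R x)|
      ≤ 9 * R ^ 2 * Real.log R := by
    rw [hsplit, hIsplit, abs_le]
    constructor <;> linarith [lA, uA, lB, uB, lC, uC, hAN, hBN, hCN]
  have hend := endgame hR
  have decomp : (∑ n ∈ Finset.Icc 1 N, fAux R n)
        - (5 / 6 - Real.log 2 / 3 - Real.pi / 6) * R ^ 3
      = ((∑ n ∈ Finset.Icc 1 N, fAux R n) - (∫ x in (1:ℝ)..(N:ℝ), fAux R x))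
        + (FAux R N - FAux R R)
        + (FAux R R - FAux R 1 - (5 / 6 - Real.log 2 / 3 - Real.pi / 6) * R ^ 3) := by
    rw [hI]
    ring
  have habs2 : |FAux R N - FAux R R| = |FAux R R - FAux R N| := abs_sub_comm _ _
  calc |(∑ n ∈ Finset.Icc 1 N, fAux R n) - (5 / 6 - Real.log 2 / 3 - Real.pi / 6) * R ^ 3|
      ≤ |(∑ n ∈ Finset.Icc 1 N, fAux R n) - (∫ x in (1:ℝ)..(N:ℝ), fAux R x)|
        + |FAux R N - FAux R R|
        + |FAux R R - FAux R 1 - (5 / 6 - Real.log 2 / 3 - Real.pi / 6) * R ^ 3| := by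
          rw [decomp]; exact abs_add_three _ _ _
    _ ≤ 9 * R ^ 2 * Real.log R + 3 * R ^ 2 * Real.log R + 10 * R ^ 2 * Real.log R := by
          rw [habs2]; exact add_le_add (add_le_add h1 htail) hend
    _ ≤ 25 * R ^ 2 * Real.log R := by nlinarith [sq_nonneg R, hu]
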